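/- Let m ≥ 2 and k ≥ 1. On a deck of m^k cards, the in m-shuffle I_m has order exactly 2k as an element of the symmetric group on the m^k card positions. -/

import Mathlib

/-- Additive form of the shuffle formula. -/
private lemma shuffle_addform (m A D Ix : ℕ) (hD : D < m)
    (h : Ix = m * A + (m - 1 - D)) : Ix + (D + 1) = m * (A + 1) := by
  have h2 : m * (A + 1) = m * A + m := by ring
  omega

/-- Division/mod extraction used in the induction step. -/
private lemma shuffle_divmod (p M j b c a' : ℕ) (hb : b < p) (ha' : a' < M)
    (h : j + (b + 1) = p * (c * M + (a' + 1))) :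
    j / (p * M) = c ∧ j % (p * M) + (b + 1) = p * (a' + 1) := by
  have hp : 0 < p := Nat.pos_of_ne_zero (by rintro rfl; omega)
  have hu : b + 1 ≤ p * (a' + 1) := by
    calc b + 1 ≤ p := hb
    _ = p * 1 := (mul_one p).symm
    _ ≤ p * (a' + 1) := Nat.mul_le_mul_left p (by omega)
  have hle : p * (a' + 1) ≤ p * M := Nat.mul_le_mul_left p (by omega)
  set s := p * (a' + 1) - (b + 1) with hs
  have hs1 : s + (b + 1) = p * (a' + 1) := Nat.sub_add_cancel hu
  have hslt : s < p * M := by omega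
  have hexp : p * (c * M + (a' + 1)) = p * M * c + p * (a' + 1) := by ring
  have hj : j = s + p * M * c := by omega
  have hpM : 0 < p * M := Nat.mul_pos hp (lt_of_le_of_lt (Nat.zero_le a') ha')
  constructor
  · rw [hj, Nat.add_mul_div_left _ _ hpM, Nat.div_eq_of_lt hslt, Nat.zero_add]
  · rw [hj, Nat.add_mul_mod_self_left, Nat.mod_eq_of_lt hslt]
    exact hs1

theorem in_shuffle_order_eq_two_k (m k : ℕ) (hm : 2 ≤ m) (hk : 1 ≤ k)
    (I : Equiv.Perm (Fin (m ^ k)))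
    (hI : ∀ i : Fin (m ^ k),
      (I i : ℕ) = m * ((i : ℕ) % m ^ (k - 1)) + (m - 1 - (i : ℕ) / m ^ (k - 1))) :
    orderOf I = 2 * k := by
  have hm0 : 0 < m := by omega
  have hn : 0 < m ^ (k - 1) := pow_pos hm0 _
  have hNk : m ^ k = m ^ (k - 1) * m := by
    rw [← pow_succ]; congr 1; omega
  -- additive form of hI
  have hI' : ∀ x : Fin (m ^ k),
      ((I x : ℕ)) + ((x : ℕ) / m ^ (k - 1) + 1) = m * ((x : ℕ) % m ^ (k - 1) + 1) := by
    intro x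
    have hDlt : (x : ℕ) / m ^ (k - 1) < m := by
      apply Nat.div_lt_of_lt_mul
      calc (x : ℕ) < m ^ k := x.isLt
      _ = m ^ (k - 1) * m := hNk
    exact shuffle_addform m _ _ _ hDlt (hI x)
  -- key induction
  have key : ∀ t, t ≤ k → ∀ i : Fin (m ^ k),
      ((I ^ t) i : ℕ) + ((i : ℕ) / m ^ (k - t) + 1)
        = m ^ t * ((i : ℕ) % m ^ (k - t) + 1) := by
    intro t
    induction t with
    | zero =>
      intro _ i
      simp only [pow_zero, Equiv.Perm.one_apply, Nat.sub_zero, one_mul]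
      rw [Nat.div_eq_of_lt i.isLt, Nat.mod_eq_of_lt i.isLt]
    | succ t ih =>
      intro ht i
      have ht' : t < k := by omega
      have IH := ih (le_of_lt ht') i
      set j : Fin (m ^ k) := (I ^ t) i with hjdef
      set M := m ^ (k - t - 1) with hM
      have hMpos : 0 < M := pow_pos hm0 _
      set a := (i : ℕ) % m ^ (k - t) with ha
      set b := (i : ℕ) / m ^ (k - t) with hb
      set a' := (i : ℕ) % M with ha'
      set c := a / M with hc
      have ha'M : a' < M := Nat.mod_lt _ hMpos
      have hMd : m ^ (k - t) = M * m := by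
        rw [hM, ← pow_succ]; congr 1; omega
      have hamod : a % M = a' := by
        rw [ha, ha', Nat.mod_mod_of_dvd _ ⟨m, hMd⟩]
      have haeq : a = c * M + a' := by
        have h1 : M * (a / M) + a % M = a := Nat.div_add_mod a M
        have h2 : M * (a / M) = (a / M) * M := by ring
        rw [hc, ← hamod]
        omega
      have hblt : b < m ^ t := by
        apply Nat.div_lt_of_lt_mul
        calc (i : ℕ) < m ^ k := i.isLt
        _ = m ^ (k - t) * m ^ t := by rw [← pow_add]; congr 1; omega
      have IH' : (j : ℕ) + (b + 1) = m ^ t * (c * M + (a' + 1)) := by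
        rw [IH, haeq]; ring
      obtain ⟨jd, jm⟩ := shuffle_divmod (m ^ t) M (j : ℕ) b c a' hblt ha'M IH'
      have hpM : m ^ t * M = m ^ (k - 1) := by rw [hM, ← pow_add]; congr 1; omega
      rw [hpM] at jd jm
      have E1 := hI' j
      rw [jd] at E1
      have hstep : ((I ^ (t + 1)) i : ℕ) = (I j : ℕ) := by
        rw [hjdef, pow_succ', Equiv.Perm.mul_apply]
      have hksub : k - (t + 1) = k - t - 1 := by omega
      have hidiv : (i : ℕ) / M = m * b + c := by
        have h1 : m ^ (k - t) * ((i : ℕ) / m ^ (k - t)) + (i : ℕ) % m ^ (k - t) = (i : ℕ) :=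
          Nat.div_add_mod _ _
        rw [← hb, ← ha, hMd, haeq] at h1
        have h2 : M * m * b + (c * M + a') = a' + M * (m * b + c) := by ring
        have h3 : (i : ℕ) = a' + M * (m * b + c) := by omega
        rw [h3, Nat.add_mul_div_left _ _ hMpos, Nat.div_eq_of_lt ha'M, Nat.zero_add]
      rw [hstep, hksub, ← hM, ← ha', hidiv]
      set r := (j : ℕ) % m ^ (k - 1) with hr
      have e2 : m * (r + (b + 1)) = m * (m ^ t * (a' + 1)) := by rw [jm]
      have e3 : m * (r + (b + 1)) = m * (r + 1) + m * b := by ring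
      have e4 : m ^ (t + 1) * (a' + 1) = m * (m ^ t * (a' + 1)) := by
        rw [pow_succ]; ring
      omega
  -- I^k is the reversal
  have hIk : ∀ i : Fin (m ^ k), ((I ^ k) i : ℕ) + ((i : ℕ) + 1) = m ^ k := by
    intro i
    have h := key k le_rfl i
    simp only [Nat.sub_self, pow_zero, Nat.div_one, Nat.mod_one, Nat.zero_add, mul_one] at h
    omega
  have h2k : I ^ (2 * k) = 1 := by
    rw [two_mul, pow_add]
    ext i
    simp only [Equiv.Perm.mul_apply, Equiv.Perm.coe_one, id_eq]
    have h0 := hIk i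
    have h1 := hIk ((I ^ k) i)
    omega
  have hdvd : orderOf I ∣ 2 * k := orderOf_dvd_of_pow_eq_one h2k
  set d := orderOf I with hd
  have hdpos : 0 < d := orderOf_pos I
  by_contra hne
  have hdlt : d < 2 * k := lt_of_le_of_ne (Nat.le_of_dvd (by omega) hdvd) hne
  have hdk : d ≤ k := by
    obtain ⟨e, he⟩ := hdvd
    have he1 : e ≠ 0 := by rintro rfl; omega
    have he2 : e ≠ 1 := by rintro rfl; omega
    have h2 : d * 2 ≤ d * e := Nat.mul_le_mul_left d (by omega)
    omega
  have hId : I ^ d = 1 := pow_orderOf_eq_one I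
  have hNpos : 0 < m ^ k := pow_pos hm0 _
  have h := key d hdk ⟨0, hNpos⟩
  rw [hId] at h
  simp only [Equiv.Perm.coe_one, id_eq, Nat.zero_div, Nat.zero_mod,
    Nat.zero_add, mul_one] at h
  have hmd : m ^ 1 ≤ m ^ d := Nat.pow_le_pow_right hm0 hdpos
  rw [pow_one] at hmd
  omega
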